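/- Let 0 ≤ β_1 < 1, 0 < β_2 < 1 with β_1^2 < β_2, and let g_1, ..., g_{t-1} be real numbers. Define m_{t-1} = (1-β_1) Σ_{i=1}^{t-1} β_1^{t-1-i} g_i and v_{t-1} = (1-β_2) Σ_{i=1}^{t-1} β_2^{t-1-i} g_i^2. Then m_{t-1} ≤ (1-β_1) sqrt( β_2 / ((1-β_2)(β_2 - β_1^2)) ) · sqrt(v_{t-1}). -/

import Mathlib

lemma geom_aux (r : ℝ) (hr : 0 ≤ r) (hr' : r < 1) (n : ℕ) :
    ∑ j ∈ Finset.range n, r ^ j ≤ 1 / (1 - r) := by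
  have hn : (0:ℝ) ≤ r ^ n := pow_nonneg hr n
  rw [geom_sum_eq (by linarith), show (r ^ n - 1) / (r - 1) = (1 - r ^ n) / (1 - r) by
    rw [← neg_div_neg_eq]; ring_nf]
  gcongr
  · linarith

/-- Cauchy–Schwarz bound on the momentum term in terms of the second-moment term. -/
theorem stmt_4 (β₁ β₂ : ℝ) (hβ₁ : 0 ≤ β₁) (hβ₁' : β₁ < 1) (hβ₂ : 0 < β₂) (hβ₂' : β₂ < 1)
    (h : β₁ ^ 2 < β₂) (t : ℕ) (g : ℕ → ℝ) :
    (1 - β₁) * ∑ i ∈ Finset.Icc 1 (t - 1), β₁ ^ (t - 1 - i) * g i ≤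
      (1 - β₁) * Real.sqrt (β₂ / ((1 - β₂) * (β₂ - β₁ ^ 2))) *
        Real.sqrt ((1 - β₂) * ∑ i ∈ Finset.Icc 1 (t - 1), β₂ ^ (t - 1 - i) * g i ^ 2) := by
  set s := Finset.Icc 1 (t - 1)
  have hb1 : (0:ℝ) < 1 - β₁ := by linarith
  have hb2 : (0:ℝ) < 1 - β₂ := by linarith
  have hd : (0:ℝ) < β₂ - β₁ ^ 2 := by linarith
  set a : ℕ → ℝ := fun i => Real.sqrt ((β₁ ^ 2 / β₂) ^ (t - 1 - i))
  set b : ℕ → ℝ := fun i => Real.sqrt (β₂ ^ (t - 1 - i)) * g i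
  have hab : ∀ i, a i * b i = β₁ ^ (t - 1 - i) * g i := by
    intro i
    have : a i * Real.sqrt (β₂ ^ (t - 1 - i)) = β₁ ^ (t - 1 - i) := by
      rw [← Real.sqrt_mul (by positivity), div_pow, div_mul_cancel₀ _ (by positivity),
        ← pow_mul, pow_mul', Real.sqrt_sq (by positivity)]
    calc a i * b i = (a i * Real.sqrt (β₂ ^ (t - 1 - i))) * g i := by ring
      _ = β₁ ^ (t - 1 - i) * g i := by rw [this]
  -- Cauchy–Schwarz
  have hCS : ∑ i ∈ s, β₁ ^ (t - 1 - i) * g i ≤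
      Real.sqrt (∑ i ∈ s, a i ^ 2) * Real.sqrt (∑ i ∈ s, b i ^ 2) := by
    calc ∑ i ∈ s, β₁ ^ (t - 1 - i) * g i = ∑ i ∈ s, a i * b i := by
          simp [hab]
      _ ≤ _ := Real.sum_mul_le_sqrt_mul_sqrt s a b
  -- sum of a² bound
  have ha2 : ∑ i ∈ s, a i ^ 2 ≤ β₂ / (β₂ - β₁ ^ 2) := by
    have h1 : ∑ i ∈ s, a i ^ 2 = ∑ i ∈ s, (β₁ ^ 2 / β₂) ^ (t - 1 - i) := by
      refine Finset.sum_congr rfl fun i _ => Real.sq_sqrt (by positivity)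
    have h2 : ∑ i ∈ s, (β₁ ^ 2 / β₂) ^ (t - 1 - i) ≤
        ∑ j ∈ Finset.range t, (β₁ ^ 2 / β₂) ^ j := by
      have hinj : ∀ x ∈ s, ∀ y ∈ s, t - 1 - x = t - 1 - y → x = y := by
        intro i hi j hj hij
        simp only [s, Finset.mem_Icc] at hi hj
        omega
      rw [show (∑ i ∈ s, (β₁ ^ 2 / β₂) ^ (t - 1 - i)) =
          ∑ j ∈ s.image (fun i => t - 1 - i), (β₁ ^ 2 / β₂) ^ j from
        (Finset.sum_image hinj).symm]
      refine Finset.sum_le_sum_of_subset_of_nonneg ?_ ?_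
      · intro j hj
        simp only [s, Finset.mem_image, Finset.mem_Icc] at hj
        simp only [Finset.mem_range]
        omega
      · intro j _ _; positivity
    have h3 := geom_aux (β₁ ^ 2 / β₂) (by positivity) (by
      rw [div_lt_one hβ₂]; exact h) t
    have h4 : 1 / (1 - β₁ ^ 2 / β₂) = β₂ / (β₂ - β₁ ^ 2) := by
      field_simp
    linarith [h1 ▸ (h2.trans (h4 ▸ h3))]
  have hb2sum : (0:ℝ) ≤ ∑ i ∈ s, b i ^ 2 := Finset.sum_nonneg fun i _ => sq_nonneg _
  have hbeq : ∑ i ∈ s, b i ^ 2 = ∑ i ∈ s, β₂ ^ (t - 1 - i) * g i ^ 2 := by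
    refine Finset.sum_congr rfl fun i _ => ?_
    rw [mul_pow, Real.sq_sqrt (by positivity)]
  -- chain
  have key : ∑ i ∈ s, β₁ ^ (t - 1 - i) * g i ≤
      Real.sqrt (β₂ / (β₂ - β₁ ^ 2)) * Real.sqrt (∑ i ∈ s, β₂ ^ (t - 1 - i) * g i ^ 2) := by
    calc ∑ i ∈ s, β₁ ^ (t - 1 - i) * g i
        ≤ Real.sqrt (∑ i ∈ s, a i ^ 2) * Real.sqrt (∑ i ∈ s, b i ^ 2) := hCS
      _ ≤ Real.sqrt (β₂ / (β₂ - β₁ ^ 2)) * Real.sqrt (∑ i ∈ s, b i ^ 2) := by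
          exact mul_le_mul_of_nonneg_right (Real.sqrt_le_sqrt ha2) (Real.sqrt_nonneg _)
      _ = _ := by rw [hbeq]
  -- constant manipulation
  have hconst : Real.sqrt (β₂ / ((1 - β₂) * (β₂ - β₁ ^ 2))) * Real.sqrt (1 - β₂) =
      Real.sqrt (β₂ / (β₂ - β₁ ^ 2)) := by
    rw [← Real.sqrt_mul (by positivity)]
    congr 1
    field_simp
  have hrhs : Real.sqrt ((1 - β₂) * ∑ i ∈ s, β₂ ^ (t - 1 - i) * g i ^ 2) =
      Real.sqrt (1 - β₂) * Real.sqrt (∑ i ∈ s, β₂ ^ (t - 1 - i) * g i ^ 2) :=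
    Real.sqrt_mul (by linarith) _
  calc (1 - β₁) * ∑ i ∈ s, β₁ ^ (t - 1 - i) * g i
      ≤ (1 - β₁) * (Real.sqrt (β₂ / (β₂ - β₁ ^ 2)) *
          Real.sqrt (∑ i ∈ s, β₂ ^ (t - 1 - i) * g i ^ 2)) :=
        mul_le_mul_of_nonneg_left key hb1.le
    _ = (1 - β₁) * Real.sqrt (β₂ / ((1 - β₂) * (β₂ - β₁ ^ 2))) *
        Real.sqrt ((1 - β₂) * ∑ i ∈ s, β₂ ^ (t - 1 - i) * g i ^ 2) := by
        rw [hrhs, ← hconst]; ring
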